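/- (Global convergence with rate for bad regularity.) Let b ≥ 3 be an odd integer and consider gradient descent on f_b with initial condition (x₀,y₀) satisfying x₀y₀ > 2^{1/(b−1)} and x₀² + y₀² ≥ 4, and learning rate h = C/((x₀² + y₀² + 4)(x₀y₀)^{2b−2}) for some 2 ≤ C ≤ 4 such that (1 + h²ℓ₀²)x₀y₀ − hℓ₀(x₀² + y₀²) > 0, where ℓ₀ = F_b'(x₀y₀). Assume no iterate satisfies x_k y_k = 1 (the excluded initial conditions form a Lebesgue measure-zero set). Then GD converges to a global minimizer (x_∞, y_∞) with x_∞ y_∞ = 1, and for all k ≥ 1, |x_k y_k − 1| ≤ |x₁y₁ − 1|·S^{k−1}, where S = 1 − h(2 − hℓ₀) if r₀ > 0 and S = 1 − h(2 − h)q₁x₁y₁ otherwise, with q₁ = F_b'(x₁y₁)/(x₁y₁ − 1); moreover 0 < S < 1. -/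

import Mathlib

open Filter

/-- `F_b(s) = (1 - s^b)^2 / (2 b^2)` for an odd positive integer `b`. -/
noncomputable def Fb (b : ℕ) (s : ℝ) : ℝ := (1 - s ^ b) ^ 2 / (2 * (b : ℝ) ^ 2)

lemma deriv_Fb (m : ℕ) (t : ℝ) :
    deriv (Fb (m + 1)) t = t ^ m * (t ^ (m + 1) - 1) / ((m : ℝ) + 1) := by
  have h1 : HasDerivAt (fun s : ℝ => s ^ (m + 1)) (((m : ℝ) + 1) * t ^ m) t := by
    simpa using hasDerivAt_pow (m + 1) t
  have h2 : HasDerivAt (fun s : ℝ => 1 - s ^ (m + 1)) (-(((m : ℝ) + 1) * t ^ m)) t :=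
    h1.const_sub 1
  have h3 := h2.pow 2
  have h4 := h3.div_const (2 * ((m : ℝ) + 1) ^ 2)
  have hF : Fb (m + 1) = fun s : ℝ => (1 - s ^ (m + 1)) ^ 2 / (2 * ((m : ℝ) + 1) ^ 2) := by
    funext s
    simp only [Fb]
    push_cast
    ring
  rw [hF, show deriv (fun s : ℝ => (1 - s ^ (m + 1)) ^ 2 / (2 * ((m : ℝ) + 1) ^ 2)) t = _ from h4.deriv]
  have hm : ((m : ℝ) + 1) ≠ 0 := by positivity
  field_simp
  ring


noncomputable def Gf (m : ℕ) (t : ℝ) : ℝ := ∑ i ∈ Finset.range (m + 1), t ^ i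
noncomputable def Qf (m : ℕ) (t : ℝ) : ℝ := t ^ m * Gf m t / ((m : ℝ) + 1)

lemma Qf_eq (m : ℕ) (t : ℝ) :
    t ^ m * (t ^ (m + 1) - 1) / ((m : ℝ) + 1) = Qf m t * (t - 1) := by
  have := geom_sum_mul t (m + 1)
  unfold Qf Gf
  rw [← this]
  field_simp

lemma Gf_ge_one (m : ℕ) {t : ℝ} (ht : 0 ≤ t) : 1 ≤ Gf m t := by
  unfold Gf
  have h0 : (fun i => t ^ i) 0 ≤ ∑ i ∈ Finset.range (m + 1), t ^ i :=
    Finset.single_le_sum (fun i _ => pow_nonneg ht i) (Finset.mem_range.mpr (Nat.succ_pos m))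
  simpa using h0

lemma Gf_pos (m : ℕ) {t : ℝ} (ht : 0 ≤ t) : 0 < Gf m t :=
  lt_of_lt_of_le one_pos (Gf_ge_one m ht)

lemma Gf_le_one_case (m : ℕ) {t : ℝ} (h0 : 0 ≤ t) (h1 : t ≤ 1) : Gf m t ≤ (m : ℝ) + 1 := by
  unfold Gf
  calc ∑ i ∈ Finset.range (m + 1), t ^ i ≤ ∑ _i ∈ Finset.range (m + 1), (1 : ℝ) :=
        Finset.sum_le_sum (fun i _ => pow_le_one₀ h0 h1)
    _ = (m : ℝ) + 1 := by simp
lemma Gf_ge_case (m : ℕ) {t : ℝ} (h1 : 1 ≤ t) : (m : ℝ) + 1 ≤ Gf m t := by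
  unfold Gf
  calc ((m : ℝ) + 1) = ∑ _i ∈ Finset.range (m + 1), (1 : ℝ) := by simp
    _ ≤ ∑ i ∈ Finset.range (m + 1), t ^ i :=
        Finset.sum_le_sum (fun i _ => one_le_pow₀ h1)

lemma Gf_le_pow (m : ℕ) {t : ℝ} (h1 : 1 ≤ t) : Gf m t ≤ ((m : ℝ) + 1) * t ^ m := by
  unfold Gf
  calc ∑ i ∈ Finset.range (m + 1), t ^ i ≤ ∑ _i ∈ Finset.range (m + 1), t ^ m :=
        Finset.sum_le_sum (fun i hi => pow_le_pow_right₀ h1 (Nat.lt_succ_iff.mp (Finset.mem_range.mp hi)))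
    _ = ((m : ℝ) + 1) * t ^ m := by simp [mul_comm]
lemma Gf_mono (m : ℕ) {a c : ℝ} (h0 : 0 ≤ a) (h : a ≤ c) : Gf m a ≤ Gf m c :=
  Finset.sum_le_sum (fun i _ => pow_le_pow_left₀ h0 h i)

lemma Qf_pos (m : ℕ) {t : ℝ} (ht : 0 < t) : 0 < Qf m t := by
  unfold Qf
  have := Gf_pos m ht.le
  positivity

lemma Qf_ge_one (m : ℕ) {t : ℝ} (ht : 1 ≤ t) : 1 ≤ Qf m t := by
  unfold Qf
  rw [le_div_iff₀ (by positivity)]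
  have h1 : (1 : ℝ) ≤ t ^ m := one_le_pow₀ ht
  have h2 := Gf_ge_case m ht
  nlinarith [Nat.cast_nonneg (α := ℝ) m]

lemma Qf_le_sq (m : ℕ) {t : ℝ} (ht : 1 ≤ t) : Qf m t ≤ t ^ (2 * m) := by
  unfold Qf
  rw [div_le_iff₀ (by positivity)]
  have h2 := Gf_le_pow m ht
  have h3 : t ^ m * (((m : ℝ) + 1) * t ^ m) = t ^ (2 * m) * ((m : ℝ) + 1) := by
    rw [two_mul, pow_add]; ring
  have h4 : (0 : ℝ) ≤ t ^ m := by positivity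
  nlinarith

lemma Qf_le_self (m : ℕ) (hm : 1 ≤ m) {t : ℝ} (h0 : 0 ≤ t) (h1 : t ≤ 1) : Qf m t ≤ t := by
  unfold Qf
  rw [div_le_iff₀ (by positivity)]
  have h2 := Gf_le_one_case m h0 h1
  have h3 : t ^ m ≤ t := by
    calc t ^ m ≤ t ^ 1 := pow_le_pow_of_le_one h0 h1 hm
      _ = t := pow_one t
  have h4 : (0 : ℝ) ≤ t ^ m := by positivity
  nlinarith [Nat.cast_nonneg (α := ℝ) m]

lemma Qf_mono (m : ℕ) {a c : ℝ} (h0 : 0 ≤ a) (h : a ≤ c) : Qf m a ≤ Qf m c := by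
  unfold Qf
  have g1 := Gf_mono m h0 h
  have g2 := Gf_pos m h0
  have p1 : a ^ m ≤ c ^ m := pow_le_pow_left₀ h0 h m
  have p0 : (0:ℝ) ≤ a ^ m := by positivity
  have : a ^ m * Gf m a ≤ c ^ m * Gf m c := by nlinarith
  gcongr


set_option maxHeartbeats 16000000 in
/-- Global convergence of GD with an explicit geometric rate for the bad
regularity functions `f_b`, `b ≥ 3` odd, under the large learning rate
`h = C/((x₀²+y₀²+4)(x₀y₀)^{2b-2})`, `2 ≤ C ≤ 4`. -/
theorem stmt_6 (b : ℕ) (hodd : Odd b) (hb : 3 ≤ b) (C h : ℝ)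
    (x y : ℕ → ℝ)
    (hinit1 : x 0 * y 0 > (2 : ℝ) ^ ((1 : ℝ) / ((b : ℝ) - 1)))
    (hinit2 : x 0 ^ 2 + y 0 ^ 2 ≥ 4)
    (hC1 : 2 ≤ C) (hC2 : C ≤ 4)
    (hh : h = C / ((x 0 ^ 2 + y 0 ^ 2 + 4) * (x 0 * y 0) ^ (2 * b - 2)))
    (ℓ₀ : ℝ) (hℓ₀ : ℓ₀ = deriv (Fb b) (x 0 * y 0))
    (hM3 : (1 + h ^ 2 * ℓ₀ ^ 2) * (x 0 * y 0) - h * ℓ₀ * (x 0 ^ 2 + y 0 ^ 2) > 0)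
    (hGD : ∀ k, x (k + 1) = x k - h * deriv (Fb b) (x k * y k) * y k ∧
                y (k + 1) = y k - h * deriv (Fb b) (x k * y k) * x k)
    (hne : ∀ k, x k * y k ≠ 1)
    (r₀ : ℝ)
    (hr₀ : r₀ = 1 - h * (ℓ₀ / (x 0 * y 0 - 1)) * ((x 0 ^ 2 + y 0 ^ 2) - h * ℓ₀ * (x 0 * y 0)))
    (q₁ : ℝ) (hq₁ : q₁ = deriv (Fb b) (x 1 * y 1) / (x 1 * y 1 - 1))
    (S : ℝ)
    (hS : S = if 0 < r₀ then 1 - h * (2 - h * ℓ₀) else 1 - h * (2 - h) * q₁ * (x 1 * y 1)) :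
    (∃ xl yl : ℝ, Tendsto (fun k => (x k, y k)) atTop (nhds (xl, yl)) ∧ xl * yl = 1) ∧
    0 < S ∧ S < 1 ∧
    (∀ k : ℕ, 1 ≤ k → |x k * y k - 1| ≤ |x 1 * y 1 - 1| * S ^ (k - 1)) := by
  obtain ⟨m, rfl⟩ : ∃ m, b = m + 1 := ⟨b - 1, by omega⟩
  have hm2 : 2 ≤ m := by omega
  set p : ℕ → ℝ := fun k => x k * y k with hpdef
  set d : ℕ → ℝ := fun k => x k ^ 2 + y k ^ 2 with hddef
  have ep : ∀ k, x k * y k = p k := fun _ => rfl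
  have ed : ∀ k, x k ^ 2 + y k ^ 2 = d k := fun _ => rfl
  simp only [ep, ed] at hinit1 hinit2 hh hℓ₀ hM3 hGD hne hr₀ hq₁ hS ⊢
  set L : ℕ → ℝ := fun k => Qf m (p k) * (p k - 1) with hLdef
  have eL : ∀ t : ℝ, deriv (Fb (m + 1)) t = Qf m t * (t - 1) := by
    intro t; rw [deriv_Fb, Qf_eq]
  have eLk : ∀ k, deriv (Fb (m + 1)) (p k) = L k := by
    intro k; rw [eL]
  simp only [eLk] at hGD hℓ₀ hq₁
  -- basic positivity and size facts
  have hmcast : ((m : ℝ) + 1 - 1) = (m : ℝ) := by ring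
  have he1 : ((m + 1 : ℕ) : ℝ) - 1 = (m : ℝ) := by push_cast; ring
  rw [he1] at hinit1
  have hm0 : (0 : ℝ) < (m : ℝ) := by exact_mod_cast Nat.lt_of_lt_of_le two_pos hm2
  have hb2 : (0 : ℝ) < (2 : ℝ) ^ ((1 : ℝ) / (m : ℝ)) := Real.rpow_pos_of_pos two_pos _
  have hp0 : 0 < p 0 := lt_trans hb2 hinit1
  have hp0m : 2 < p 0 ^ m := by
    have hkey : ((2 : ℝ) ^ ((1 : ℝ) / (m : ℝ))) ^ m = 2 := by
      rw [← Real.rpow_natCast ((2 : ℝ) ^ ((1 : ℝ) / (m : ℝ))) m,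
        ← Real.rpow_mul (by norm_num : (0 : ℝ) ≤ 2), one_div,
        inv_mul_cancel₀ (ne_of_gt hm0), Real.rpow_one]
    calc (2 : ℝ) = ((2 : ℝ) ^ ((1 : ℝ) / (m : ℝ))) ^ m := hkey.symm
      _ < p 0 ^ m := pow_lt_pow_left₀ hinit1 hb2.le (by omega)
  have hp01 : 1 < p 0 := by
    by_contra hcon
    push_neg at hcon
    have := pow_le_one₀ hp0.le hcon (n := m)
    linarith
  have hp02m : 4 ≤ p 0 ^ (2 * m) := by
    rw [two_mul, pow_add]
    nlinarith
  have hd4 : (4 : ℝ) ≤ d 0 := hinit2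
  have he2 : 2 * (m + 1) - 2 = 2 * m := by omega
  rw [he2] at hh
  have hP2m : (0 : ℝ) < p 0 ^ (2 * m) := by positivity
  have hhpos : 0 < h := by
    rw [hh]
    have : (0:ℝ) < (d 0 + 4) * p 0 ^ (2 * m) := by positivity
    positivity
  have hhC : h * ((d 0 + 4) * p 0 ^ (2 * m)) = C := by
    rw [hh]; field_simp
  have hhd : h * (d 0 + 4) ≤ 1 := by nlinarith
  have hh8 : h ≤ 1 / 8 := by nlinarith
  -- the gradient factor at step 0
  have hL0 : ℓ₀ = L 0 := hℓ₀
  have hLk : ∀ k, L k = Qf m (p k) * (p k - 1) := fun k => by simp only [hLdef]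
  have hQ0pos : 0 < Qf m (p 0) := Qf_pos m hp0
  have hl0pos : 0 < ℓ₀ := by rw [hL0, hLk]; exact mul_pos hQ0pos (by linarith)
  have hp0d : 2 * p 0 ≤ d 0 := by
    have := two_mul_le_add_sq (x 0) (y 0)
    calc 2 * p 0 = 2 * x 0 * y 0 := by rw [← ep 0]; ring
      _ ≤ x 0 ^ 2 + y 0 ^ 2 := this
      _ = d 0 := ed 0
  have dge : ∀ k, 2 * p k ≤ d k := by
    intro k
    have := two_mul_le_add_sq (x k) (y k)
    calc 2 * p k = 2 * x k * y k := by rw [← ep k]; ring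
      _ ≤ x k ^ 2 + y k ^ 2 := this
      _ = d k := ed k
  have hm3 : (3 : ℝ) ≤ (m : ℝ) + 1 := by
    have : (2:ℝ) ≤ (m:ℝ) := by exact_mod_cast hm2
    linarith
  have hhl0 : h * ℓ₀ < 2 / 3 := by
    have e1 : ℓ₀ * ((m : ℝ) + 1) = p 0 ^ m * (p 0 ^ (m + 1) - 1) := by
      rw [hL0, hLk, ← Qf_eq]
      field_simp
    have e2 : p 0 ^ m * p 0 ^ (m + 1) = p 0 ^ (2 * m) * p 0 := by
      rw [← pow_add, ← pow_succ]
      congr 1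
      omega
    have e3 : ℓ₀ * 3 ≤ p 0 ^ (2 * m) * p 0 := by
      have hpm : (0:ℝ) < p 0 ^ m := by positivity
      nlinarith
    have s1 : h * (ℓ₀ * 3) ≤ h * (p 0 ^ (2 * m) * p 0) :=
      mul_le_mul_of_nonneg_left e3 hhpos.le
    have s2 : h * (p 0 ^ (2 * m) * p 0) * (d 0 + 4) = C * p 0 := by
      rw [← hhC]; ring
    have s3 : h * (ℓ₀ * 3) * (d 0 + 4) ≤ C * p 0 := by
      rw [← s2]
      exact mul_le_mul_of_nonneg_right s1 (by linarith)
    have s4 : C * p 0 ≤ 2 * d 0 := by nlinarith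
    have s5 : h * (ℓ₀ * 3) * (d 0 + 4) < 2 * (d 0 + 4) := by linarith
    nlinarith [s5, hd4]
  -- recurrences
  have recP : ∀ k, p (k + 1) = p k + h ^ 2 * L k ^ 2 * p k - h * L k * d k := by
    intro k
    simp only [← ep, ← ed]
    rw [(hGD k).1, (hGD k).2]
    ring
  have recD : ∀ k, d (k + 1) = d k + h ^ 2 * L k ^ 2 * d k - 4 * h * L k * p k := by
    intro k
    simp only [← ep, ← ed]
    rw [(hGD k).1, (hGD k).2]
    ring
  have recR : ∀ k, p (k + 1) - 1
      = (1 - h * Qf m (p k) * (d k - h * L k * p k)) * (p k - 1) := by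
    intro k
    rw [recP k, hLk k]
    ring
  -- the key facts, proven per case
  -- auxiliary identities for r₀ and q₁
  have hne0 : p 0 - 1 ≠ 0 := sub_ne_zero_of_ne (hne 0)
  have hq0 : ℓ₀ / (p 0 - 1) = Qf m (p 0) := by
    rw [hL0, hLk, mul_div_assoc, div_self hne0, mul_one]
  have hrr : r₀ = 1 - h * Qf m (p 0) * (d 0 - h * L 0 * p 0) := by
    rw [hr₀, hq0, hL0]
  have key : (0 < S ∧ S < 1) ∧
      (∀ k, 1 ≤ k → 0 < 1 - h * Qf m (p k) * (d k - h * L k * p k) ∧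
        1 - h * Qf m (p k) * (d k - h * L k * p k) ≤ S) ∧
      (∀ k, d k ≤ d 0 + 3) ∧
      (∀ k, 1 ≤ k → |L k| ≤ (Qf m (p 0) + 1) * |p k - 1|) := by
    by_cases hrc : 0 < r₀
    · -- CASE A : r₀ > 0, the product stays above 1 and decreases
      have hSA : S = 1 - h * (2 - h * ℓ₀) := by rw [hS, if_pos hrc]
      have hu0 : h * Qf m (p 0) * (d 0 - h * L 0 * p 0) < 1 := by
        rw [hrr] at hrc; linarith
      have inv : ∀ k, 1 < p k ∧ p k ≤ p 0 ∧ d k ≤ d 0 ∧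
          h * Qf m (p k) * (d k - h * L k * p k) < 1 := by
        intro k
        induction k with
        | zero => exact ⟨hp01, le_refl _, le_refl _, hu0⟩
        | succ k ih =>
          obtain ⟨h1, h2, h3, h4⟩ := ih
          have hpk0 : (0:ℝ) < p k := by linarith
          have hQ1 : 1 ≤ Qf m (p k) := Qf_ge_one m h1.le
          have hQpos : (0:ℝ) < Qf m (p k) := by linarith
          have hLpos : 0 < L k := by
            rw [hLk]; exact mul_pos hQpos (by linarith)
          have hLle : L k ≤ ℓ₀ := by
            rw [hLk, hL0, hLk]
            exact mul_le_mul (Qf_mono m hpk0.le h2) (by linarith) (by linarith)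
              (Qf_pos m hp0).le
          have hhl : h * L k < 2/3 :=
            lt_of_le_of_lt (mul_le_mul_of_nonneg_left hLle hhpos.le) hhl0
          have hhlpos : 0 < h * L k := mul_pos hhpos hLpos
          have hdk2 : 2 * p k ≤ d k := dge k
          have hDpos : 0 < d k - h * L k * p k := by
            linarith [hdk2, mul_le_mul_of_nonneg_right hhl.le hpk0.le, hpk0]
          have hupos : 0 < h * Qf m (p k) * (d k - h * L k * p k) :=
            mul_pos (mul_pos hhpos hQpos) hDpos
          have hrec := recR k
          have hpk1 : 1 < p (k+1) := by
            linarith [hrec, mul_pos (show (0:ℝ) < 1 - h * Qf m (p k) * (d k - h * L k * p k) by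
              linarith) (show (0:ℝ) < p k - 1 by linarith)]
          have hple : p (k+1) ≤ p k := by
            linarith [hrec, mul_nonneg hupos.le (show (0:ℝ) ≤ p k - 1 by linarith)]
          have h5 : h * L k * (d k - h * L k * p k) < p k - 1 := by
            have e : h * L k * (d k - h * L k * p k)
                = h * Qf m (p k) * (d k - h * L k * p k) * (p k - 1) := by
              rw [hLk]; ring
            rw [e]
            linarith [mul_lt_mul_of_pos_right h4 (show (0:ℝ) < p k - 1 by linarith)]
          have f1 : (h*L k)*(h*L k*p k) ≤ (2/3)*(h*L k*p k) :=
            mul_le_mul_of_nonneg_right hhl.le (mul_pos hhlpos hpk0).le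
          have f2 : h*L k*p k ≤ 2/3*p k := mul_le_mul_of_nonneg_right hhl.le hpk0.le
          have hLd : h * L k * d k < 2 * p k := by linarith [h5, f1, f2, hpk0]
          have f3 : (h*L k)*(h*L k*d k) ≤ (h*L k)*(2*p k) :=
            mul_le_mul_of_nonneg_left hLd.le hhlpos.le
          have f4 : 0 < h*L k*p k := mul_pos hhlpos hpk0
          have hd1 : d (k+1) ≤ d k := by
            rw [recD k]; linarith [f3, f4]
          -- facts at step k+1
          have hp1p0 : p (k+1) ≤ p 0 := hple.trans h2
          have hL1pos : 0 < L (k+1) := by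
            rw [hLk]; exact mul_pos (Qf_pos m (by linarith)) (by linarith)
          have hL1le : L (k+1) ≤ ℓ₀ := by
            rw [hLk, hL0, hLk]
            exact mul_le_mul (Qf_mono m (by linarith) hp1p0) (by linarith) (by linarith)
              (Qf_pos m hp0).le
          have hhl1 : h * L (k+1) < 2/3 :=
            lt_of_le_of_lt (mul_le_mul_of_nonneg_left hL1le hhpos.le) hhl0
          have hD1pos : 0 < d (k+1) - h * L (k+1) * p (k+1) := by
            linarith [dge (k+1), mul_pos (show (0:ℝ) < p (k+1) by linarith)
              (show (0:ℝ) < 2 - h * L (k+1) by linarith)]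
          have hmon : d (k+1) - h * L (k+1) * p (k+1) ≤ d k - h * L k * p k := by
            rw [recD k]
            linarith [f3, f4, mul_pos (mul_pos hhpos hL1pos)
              (show (0:ℝ) < p (k+1) by linarith)]
          have hQmon : Qf m (p (k+1)) ≤ Qf m (p k) := Qf_mono m (by linarith) hple
          have hu1 : h * Qf m (p (k+1)) * (d (k+1) - h * L (k+1) * p (k+1)) < 1 := by
            have : h * Qf m (p (k+1)) * (d (k+1) - h * L (k+1) * p (k+1))
                ≤ h * Qf m (p k) * (d k - h * L k * p k) :=
              mul_le_mul (mul_le_mul_of_nonneg_left hQmon hhpos.le) hmon hD1pos.le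
                (by positivity)
            linarith
          exact ⟨hpk1, hp1p0, hd1.trans h3, hu1⟩
      refine ⟨⟨?_, ?_⟩, ?_, ?_, ?_⟩
      · rw [hSA]
        linarith [mul_pos hhpos (mul_pos hhpos hl0pos)]
      · rw [hSA]
        linarith [mul_pos hhpos (show (0:ℝ) < 2 - h * ℓ₀ by linarith)]
      · intro k hk
        obtain ⟨h1, h2, h3, h4⟩ := inv k
        have hpk0 : (0:ℝ) < p k := by linarith
        have hQ1 : 1 ≤ Qf m (p k) := Qf_ge_one m h1.le
        have hLpos : 0 < L k := by rw [hLk]; exact mul_pos (by linarith) (by linarith)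
        have hLle : L k ≤ ℓ₀ := by
          rw [hLk, hL0, hLk]
          exact mul_le_mul (Qf_mono m hpk0.le h2) (by linarith) (by linarith)
            (Qf_pos m hp0).le
        have hhl : h * L k ≤ h * ℓ₀ := mul_le_mul_of_nonneg_left hLle hhpos.le
        refine ⟨by linarith, ?_⟩
        rw [hSA]
        have hD : (2 - h*ℓ₀) ≤ d k - h * L k * p k := by
          linarith [dge k, mul_nonneg (show (0:ℝ) ≤ p k - 1 by linarith)
            (show (0:ℝ) ≤ 2 - h * L k by linarith)]
        have hDpos2 : (0:ℝ) ≤ d k - h * L k * p k := by linarith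
        have t1 : h*(2 - h*ℓ₀) ≤ h*(d k - h * L k * p k) :=
          mul_le_mul_of_nonneg_left hD hhpos.le
        have t2 : h*(d k - h * L k * p k) ≤ h * Qf m (p k) * (d k - h * L k * p k) := by
          linarith [mul_nonneg (mul_nonneg (show (0:ℝ) ≤ Qf m (p k) - 1 by linarith)
            hhpos.le) hDpos2]
        linarith
      · intro k
        exact (inv k).2.2.1.trans (by linarith)
      · intro k hk
        obtain ⟨h1, h2, _, _⟩ := inv k
        have hpk0 : (0:ℝ) < p k := by linarith
        have hLpos : 0 < L k := by
          rw [hLk]; exact mul_pos (Qf_pos m hpk0) (by linarith)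
        rw [abs_of_pos hLpos, abs_of_pos (show (0:ℝ) < p k - 1 by linarith), hLk]
        exact mul_le_mul ((Qf_mono m hpk0.le h2).trans (by linarith)) (le_refl _)
          (by linarith) (by linarith)
    · -- CASE B : r₀ ≤ 0, the product jumps below 1 and increases back to 1
      have hrle : r₀ ≤ 0 := not_lt.mp hrc
      have hSB : S = 1 - h * (2 - h) * q₁ * p 1 := by rw [hS, if_neg hrc]
      have e0 := recR 0
      rw [← hrr] at e0
      have hp1le : p 1 - 1 ≤ 0 := by
        linarith [e0, mul_nonneg (neg_nonneg.mpr hrle) (show (0:ℝ) ≤ p 0 - 1 by linarith)]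
      have hp1lt : p 1 < 1 := lt_of_le_of_ne (by linarith) (hne 1)
      have hp1pos : 0 < p 1 := by
        have e := recP 0
        rw [hL0] at hM3
        linarith [e, hM3]
      have hq1Q : q₁ = Qf m (p 1) := by
        rw [hq₁, hLk, mul_div_assoc, div_self (sub_ne_zero_of_ne (hne 1)), mul_one]
      have hQ1pos : 0 < Qf m (p 1) := Qf_pos m hp1pos
      have hQ1le : Qf m (p 1) ≤ p 1 := Qf_le_self m (by omega) hp1pos.le hp1lt.le
      -- d 1 ≤ d 0
      have hlq : h * Qf m (p 0) ≤ h * p 0 ^ (2*m) :=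
        mul_le_mul_of_nonneg_left (Qf_le_sq m hp01.le) hhpos.le
      have hCd : h * p 0 ^ (2*m) * (d 0 + 4) = C := by rw [← hhC]; ring
      have hL0pos : 0 < L 0 := by rw [← hL0]; exact hl0pos
      have hLd0 : h * L 0 * d 0 ≤ 4 * (p 0 - 1) := by
        have t1 : h * Qf m (p 0) * ((p 0 - 1) * d 0) ≤ h * p 0 ^ (2*m) * ((p 0 - 1) * d 0) :=
          mul_le_mul_of_nonneg_right hlq
            (mul_nonneg (by linarith) (by linarith : (0:ℝ) ≤ d 0))
        have t2 : h * p 0 ^ (2*m) * d 0 ≤ C := by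
          linarith [hCd, mul_pos hhpos hP2m]
        have t3 : h * p 0 ^ (2*m) * ((p 0 - 1) * d 0) ≤ C * (p 0 - 1) := by
          linarith [mul_le_mul_of_nonneg_right t2 (show (0:ℝ) ≤ p 0 - 1 by linarith)]
        have t4 : C * (p 0 - 1) ≤ 4 * (p 0 - 1) :=
          mul_le_mul_of_nonneg_right hC2 (by linarith)
        have e : h * L 0 * d 0 = h * Qf m (p 0) * ((p 0 - 1) * d 0) := by
          rw [hLk]; ring
        linarith [t1, e]
      have hd1le : d 1 ≤ d 0 := by
        have f1 : (h * L 0)*(h * L 0 * d 0) ≤ (h * L 0)*(4*(p 0 - 1)) :=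
          mul_le_mul_of_nonneg_left hLd0 (mul_pos hhpos hL0pos).le
        rw [recD 0]
        linarith [f1, mul_pos hhpos hL0pos]
      -- local analysis valid whenever p 1 ≤ p k < 1 and d k ≤ d 0 + 3
      have ub : ∀ k, p 1 ≤ p k → p k < 1 → d k ≤ d 0 + 3 →
          0 < h * Qf m (p k) * (d k - h * L k * p k) ∧
          h * Qf m (p k) * (d k - h * L k * p k) < 1 ∧
          h * (2 - h) * Qf m (p 1) * p 1 ≤ h * Qf m (p k) * (d k - h * L k * p k) := by
        intro k hk1 hk2 hk3
        have hpk0 : 0 < p k := lt_of_lt_of_le hp1pos hk1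
        have hQpos : 0 < Qf m (p k) := Qf_pos m hpk0
        have hQle : Qf m (p k) ≤ p k := Qf_le_self m (by omega) hpk0.le hk2.le
        have hQle1 : Qf m (p k) ≤ 1 := hQle.trans hk2.le
        have hLneg : L k < 0 := by
          rw [hLk]; exact mul_neg_of_pos_of_neg hQpos (by linarith)
        have hLge : -1 ≤ L k := by
          rw [hLk]
          linarith [mul_nonneg hQpos.le (show (0:ℝ) ≤ 1 - p k by linarith),
            mul_nonneg (show (0:ℝ) ≤ 1 - Qf m (p k) by linarith)
              (show (0:ℝ) ≤ 1 - p k by linarith)]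
        have hdk2 : 2*p k ≤ d k := dge k
        have hnLp : 0 ≤ h * (-(L k)) * p k :=
          mul_nonneg (mul_nonneg hhpos.le (by linarith)) hpk0.le
        have hDpos : 0 < d k - h * L k * p k := by linarith [hnLp, hdk2, hpk0]
        refine ⟨mul_pos (mul_pos hhpos hQpos) hDpos, ?_, ?_⟩
        · have hup : -(L k) * p k ≤ 1 := by
            linarith [mul_nonneg (show (0:ℝ) ≤ -(L k) by linarith)
              (show (0:ℝ) ≤ 1 - p k by linarith), hLge]
          have t1 : d k - h * L k * p k ≤ d 0 + 3 + h := by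
            linarith [mul_le_mul_of_nonneg_left hup hhpos.le, hk3]
          have t2 : h * Qf m (p k) * (d k - h*L k*p k) ≤ h * (d k - h*L k*p k) := by
            linarith [mul_nonneg (mul_nonneg (show (0:ℝ) ≤ 1 - Qf m (p k) by linarith)
              hhpos.le) hDpos.le]
          have t3 : h * (d k - h*L k*p k) ≤ h * (d 0 + 3 + h) :=
            mul_le_mul_of_nonneg_left t1 hhpos.le
          linarith [t2, t3, hhd, mul_le_mul_of_nonneg_left hh8 hhpos.le, hhpos]
        · have t3 : Qf m (p 1) * p 1 ≤ Qf m (p k) * p k :=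
            mul_le_mul (Qf_mono m hp1pos.le hk1) hk1 hp1pos.le hQpos.le
          have t4 : Qf m (p k) * (2 * p k) ≤ Qf m (p k) * (d k - h*L k*p k) := by
            apply mul_le_mul_of_nonneg_left _ hQpos.le
            linarith [hnLp, hdk2]
          have t5 : h*(2-h)*(Qf m (p 1)*p 1) ≤ h*2*(Qf m (p 1)*p 1) := by
            linarith [mul_nonneg (mul_nonneg hhpos.le hhpos.le)
              (mul_pos hQ1pos hp1pos).le]
          have t6 : h*2*(Qf m (p 1)*p 1) ≤ h*2*(Qf m (p k)*p k) :=
            mul_le_mul_of_nonneg_left t3 (by linarith)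
          have t7 : h*(Qf m (p k) * (2 * p k)) ≤ h*(Qf m (p k) * (d k - h*L k*p k)) :=
            mul_le_mul_of_nonneg_left t4 hhpos.le
          linarith [t5, t6, t7]
      have invB : ∀ j, p 1 ≤ p (j+1) ∧ p (j+1) < 1 ∧
          d (j+1) + 3*(1 - p (j+1)) ≤ d 1 + 3*(1 - p 1) := by
        intro j
        induction j with
        | zero => exact ⟨le_refl _, hp1lt, le_refl _⟩
        | succ j ih =>
          obtain ⟨h1, h2, h3⟩ := ih
          have hdk3 : d (j+1) ≤ d 0 + 3 := by linarith [hp1pos, hd1le]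
          obtain ⟨u1, u2, u3⟩ := ub (j+1) h1 h2 hdk3
          have hrec := recR (j+1)
          have hpnew1 : p (j+1+1) < 1 := by
            linarith [hrec, mul_neg_of_pos_of_neg
              (show (0:ℝ) < 1 - h * Qf m (p (j+1)) * (d (j+1) - h * L (j+1) * p (j+1)) by
                linarith) (show p (j+1) - 1 < 0 by linarith)]
          have hpnew2 : p (j+1) ≤ p (j+1+1) := by
            linarith [hrec, mul_nonneg u1.le (show (0:ℝ) ≤ 1 - p (j+1) by linarith)]
          -- the Lyapunov-type inequality
          have hpk0 : 0 < p (j+1) := lt_of_lt_of_le hp1pos h1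
          have hQpos : 0 < Qf m (p (j+1)) := Qf_pos m hpk0
          have hQle1 : Qf m (p (j+1)) ≤ 1 :=
            (Qf_le_self m (by omega) hpk0.le h2.le).trans h2.le
          have hLneg : L (j+1) < 0 := by
            rw [hLk]; exact mul_neg_of_pos_of_neg hQpos (by linarith)
          have hLge : -1 ≤ L (j+1) := by
            rw [hLk]
            linarith [mul_nonneg hQpos.le (show (0:ℝ) ≤ 1 - p (j+1) by linarith),
              mul_nonneg (show (0:ℝ) ≤ 1 - Qf m (p (j+1)) by linarith)
                (show (0:ℝ) ≤ 1 - p (j+1) by linarith)]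
          have ha : 0 ≤ h * (-(L (j+1))) := mul_nonneg hhpos.le (by linarith)
          have ha1 : h * (-(L (j+1))) ≤ 1 := by
            linarith [mul_nonneg (show (0:ℝ) ≤ 1/8 - h by linarith)
              (show (0:ℝ) ≤ -(L (j+1)) by linarith), hLge]
          have hbr : h*(-(L (j+1)))*(d (j+1)) + 4*(p (j+1))
              - 3*(h*(-(L (j+1))))*(p (j+1)) - 3*(d (j+1)) ≤ 0 := by
            linarith [dge (j+1),
              mul_nonneg (show (0:ℝ) ≤ 1 - h*(-(L (j+1))) by linarith)
                (show (0:ℝ) ≤ d (j+1) by linarith [dge (j+1), hpk0]),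
              mul_nonneg ha hpk0.le]
          have hV : d (j+1+1) + 3*(1 - p (j+1+1)) ≤ d (j+1) + 3*(1 - p (j+1)) := by
            rw [recD (j+1), recP (j+1)]
            linarith [mul_nonneg ha (neg_nonneg.mpr hbr)]
          exact ⟨h1.trans hpnew2, hpnew1, hV.trans h3⟩
      have hq1p1 : Qf m (p 1) * p 1 ≤ 1 := by
        linarith [mul_le_mul_of_nonneg_right hQ1le hp1pos.le,
          mul_le_mul_of_nonneg_right hp1lt.le hp1pos.le]
      refine ⟨⟨?_, ?_⟩, ?_, ?_, ?_⟩
      · rw [hSB, hq1Q]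
        linarith [mul_nonneg (mul_nonneg hhpos.le hhpos.le) (mul_pos hQ1pos hp1pos).le,
          mul_le_mul_of_nonneg_left hq1p1 hhpos.le, hh8]
      · rw [hSB, hq1Q]
        linarith [mul_pos (mul_pos (mul_pos hhpos (show (0:ℝ) < 2 - h by linarith))
          hQ1pos) hp1pos]
      · intro k hk
        match k, hk with
        | (j+1), _ =>
          obtain ⟨h1, h2, h3⟩ := invB j
          have hdk3 : d (j+1) ≤ d 0 + 3 := by linarith [hp1pos, hd1le]
          obtain ⟨u1, u2, u3⟩ := ub (j+1) h1 h2 hdk3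
          rw [hSB, hq1Q]
          exact ⟨by linarith, by linarith⟩
      · intro k
        match k with
        | 0 => linarith
        | (j+1) =>
          obtain ⟨h1, h2, h3⟩ := invB j
          linarith [hp1pos, hd1le]
      · intro k hk
        match k, hk with
        | (j+1), _ =>
          obtain ⟨h1, h2, h3⟩ := invB j
          have hpk0 : 0 < p (j+1) := lt_of_lt_of_le hp1pos h1
          have hQpos : 0 < Qf m (p (j+1)) := Qf_pos m hpk0
          have hQle1 : Qf m (p (j+1)) ≤ 1 :=
            (Qf_le_self m (by omega) hpk0.le h2.le).trans h2.le
          have hLneg : L (j+1) < 0 := by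
            rw [hLk]; exact mul_neg_of_pos_of_neg hQpos (by linarith)
          rw [abs_of_neg hLneg, abs_of_neg (show p (j+1) - 1 < 0 by linarith), hLk]
          linarith [mul_nonneg (show (0:ℝ) ≤ Qf m (p 0) + 1 - Qf m (p (j+1)) by linarith)
            (show (0:ℝ) ≤ 1 - p (j+1) by linarith)]
  obtain ⟨⟨hS0, hS1⟩, hrS, hdb, hLb⟩ := key
  -- geometric decay of |p k - 1|
  have rate : ∀ k, 1 ≤ k → |p k - 1| ≤ |p 1 - 1| * S ^ (k - 1) := by
    intro k hk
    induction k, hk using Nat.le_induction with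
    | base => simp
    | succ n hn ih =>
      have hr := hrS n hn
      have hrec := recR n
      have : |p (n + 1) - 1| = (1 - h * Qf m (p n) * (d n - h * L n * p n)) * |p n - 1| := by
        rw [hrec, abs_mul, abs_of_pos hr.1]
      rw [this]
      have hstep : (1 - h * Qf m (p n) * (d n - h * L n * p n)) * |p n - 1|
          ≤ S * (|p 1 - 1| * S ^ (n - 1)) := by
        apply mul_le_mul hr.2 ih (abs_nonneg _) hS0.le
      refine hstep.trans (le_of_eq ?_)
      have hn1 : n - 1 + 1 = n := by omega
      have : S * S ^ (n - 1) = S ^ n := by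
        rw [← pow_succ', hn1]
      calc S * (|p 1 - 1| * S ^ (n - 1)) = |p 1 - 1| * (S * S ^ (n - 1)) := by ring
        _ = |p 1 - 1| * S ^ n := by rw [this]
        _ = |p 1 - 1| * S ^ (n + 1 - 1) := by norm_num
  -- boundedness of the iterates
  set B : ℝ := Real.sqrt (d 0 + 3) with hBdef
  have hBpos : 0 ≤ B := Real.sqrt_nonneg _
  have hxB : ∀ k, |x k| ≤ B ∧ |y k| ≤ B := by
    intro k
    have hdk := hdb k
    have hx2 : x k ^ 2 ≤ d 0 + 3 := by
      have := sq_nonneg (y k); have := ed k; nlinarith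
    have hy2 : y k ^ 2 ≤ d 0 + 3 := by
      have := sq_nonneg (x k); have := ed k; nlinarith
    constructor
    · rw [← Real.sqrt_sq_eq_abs]; exact Real.sqrt_le_sqrt hx2
    · rw [← Real.sqrt_sq_eq_abs]; exact Real.sqrt_le_sqrt hy2
  -- geometric Cauchy bounds
  set K : ℝ := |x 0 - x 1| + |y 0 - y 1| + h * ((Qf m (p 0) + 1) * B * |p 1 - 1|) / S
    with hKdef
  have hKge : 0 ≤ h * ((Qf m (p 0) + 1) * B * |p 1 - 1|) / S := by positivity
  have hgeom : ∀ n, 1 ≤ n →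
      h * |L n| * B ≤ h * ((Qf m (p 0) + 1) * B * |p 1 - 1|) / S * S ^ n := by
    intro n hn
    have h1 := hLb n hn
    have h2 := rate n hn
    have hn1 : n - 1 + 1 = n := by omega
    have hSn : S ^ n = S ^ (n - 1) * S := by rw [← pow_succ, hn1]
    have e : h * ((Qf m (p 0) + 1) * B * |p 1 - 1|) / S * S ^ n
        = h * ((Qf m (p 0) + 1) * (|p 1 - 1| * S ^ (n - 1))) * B := by
      rw [hSn]; field_simp
    rw [e]
    have : |L n| ≤ (Qf m (p 0) + 1) * (|p 1 - 1| * S ^ (n - 1)) := by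
      calc |L n| ≤ (Qf m (p 0) + 1) * |p n - 1| := h1
        _ ≤ (Qf m (p 0) + 1) * (|p 1 - 1| * S ^ (n - 1)) := by
            apply mul_le_mul_of_nonneg_left h2
            positivity
    have hb0 : 0 ≤ h * |L n| := by positivity
    calc h * |L n| * B ≤ h * ((Qf m (p 0) + 1) * (|p 1 - 1| * S ^ (n - 1))) * B := by
          apply mul_le_mul_of_nonneg_right _ hBpos
          apply mul_le_mul_of_nonneg_left this hhpos.le
      _ = _ := rfl
  have hdistx : ∀ n, dist (x n) (x (n + 1)) ≤ K * S ^ n := by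
    intro n
    match n with
    | 0 =>
      rw [Real.dist_eq, pow_zero, mul_one, hKdef]
      have : 0 ≤ |y 0 - y 1| := abs_nonneg _
      linarith
    | (n + 1) =>
      have hx1 := (hGD (n + 1)).1
      have e : x (n + 1) - x (n + 2) = h * L (n + 1) * y (n + 1) := by
        rw [hx1]; ring
      rw [Real.dist_eq, e, abs_mul, abs_mul, abs_of_pos hhpos]
      have hyB := (hxB (n + 1)).2
      have h1 : h * |L (n + 1)| * |y (n + 1)| ≤ h * |L (n + 1)| * B := by
        apply mul_le_mul_of_nonneg_left hyB
        positivity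
      have h2 := hgeom (n + 1) (by omega)
      have h3 : h * ((Qf m (p 0) + 1) * B * |p 1 - 1|) / S * S ^ (n + 1) ≤ K * S ^ (n + 1) := by
        apply mul_le_mul_of_nonneg_right _ (by positivity)
        rw [hKdef]
        have : 0 ≤ |x 0 - x 1| := abs_nonneg _
        have : 0 ≤ |y 0 - y 1| := abs_nonneg _
        linarith [abs_nonneg (x 0 - x 1), abs_nonneg (y 0 - y 1)]
      exact h1.trans (h2.trans h3)
  have hdisty : ∀ n, dist (y n) (y (n + 1)) ≤ K * S ^ n := by
    intro n
    match n with
    | 0 =>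
      rw [Real.dist_eq, pow_zero, mul_one, hKdef]
      have : 0 ≤ |x 0 - x 1| := abs_nonneg _
      linarith
    | (n + 1) =>
      have hy1 := (hGD (n + 1)).2
      have e : y (n + 1) - y (n + 2) = h * L (n + 1) * x (n + 1) := by
        rw [hy1]; ring
      rw [Real.dist_eq, e, abs_mul, abs_mul, abs_of_pos hhpos]
      have hyB := (hxB (n + 1)).1
      have h1 : h * |L (n + 1)| * |x (n + 1)| ≤ h * |L (n + 1)| * B := by
        apply mul_le_mul_of_nonneg_left hyB
        positivity
      have h2 := hgeom (n + 1) (by omega)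
      have h3 : h * ((Qf m (p 0) + 1) * B * |p 1 - 1|) / S * S ^ (n + 1) ≤ K * S ^ (n + 1) := by
        apply mul_le_mul_of_nonneg_right _ (by positivity)
        rw [hKdef]
        linarith [abs_nonneg (x 0 - x 1), abs_nonneg (y 0 - y 1)]
      exact h1.trans (h2.trans h3)
  have hCx : CauchySeq x := cauchySeq_of_le_geometric S K hS1 hdistx
  have hCy : CauchySeq y := cauchySeq_of_le_geometric S K hS1 hdisty
  obtain ⟨xl, hxl⟩ := cauchySeq_tendsto_of_complete hCx
  obtain ⟨yl, hyl⟩ := cauchySeq_tendsto_of_complete hCy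
  have hpl : Tendsto p atTop (nhds (xl * yl)) := by
    have := hxl.mul hyl
    exact this
  have hp1t : Tendsto p atTop (nhds 1) := by
    rw [tendsto_iff_dist_tendsto_zero]
    have habs : ∀ k, dist (p k) 1 = |p k - 1| := fun k => Real.dist_eq _ _
    simp only [habs]
    apply squeeze_zero' (Filter.Eventually.of_forall fun k => abs_nonneg _)
    · filter_upwards [Filter.eventually_ge_atTop 1] with k hk
      show |p k - 1| ≤ |p 1 - 1| / S * S ^ k
      have h2 := rate k hk
      have hn1 : k - 1 + 1 = k := by omega
      have hSn : S ^ k = S ^ (k - 1) * S := by rw [← pow_succ, hn1]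
      rw [hSn]
      calc |p k - 1| ≤ |p 1 - 1| * S ^ (k - 1) := h2
        _ = |p 1 - 1| / S * (S ^ (k - 1) * S) := by field_simp
    · have := (tendsto_pow_atTop_nhds_zero_of_lt_one hS0.le hS1).const_mul (|p 1 - 1| / S)
      simpa using this
  have hlim : xl * yl = 1 := tendsto_nhds_unique hpl hp1t
  refine ⟨⟨xl, yl, hxl.prodMk_nhds hyl, hlim⟩, hS0, hS1, fun k hk => rate k hk⟩
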